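/- Assume Σ_{i=1}^m p_i(n) < 1 for all n and that for some r ∈ ℕ, limsup_{n→∞} Σ_{j=n}^{ρ(n)} Σ_{i=1}^m p_i(j) b_r(ρ(n), σ_i(j))^{−1} > 1. Then every solution of (E_A) oscillates. -/
import Mathlib


/-- `bA p σ r n k` is the quantity `b_{r+1}(n,k)` of the paper:
`b_1(n,k) = ∏_{i=n+1}^{k} [1 - ∑_ℓ p_ℓ(i)]` and
`b_{r+1}(n,k) = ∏_{i=n+1}^{k} [1 - ∑_ℓ p_ℓ(i) b_r(i,σ_ℓ(i))⁻¹]` (empty products are 1). -/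
noncomputable def bA {m : ℕ} (p : Fin m → ℕ → ℝ) (σ : Fin m → ℕ → ℕ) : ℕ → ℕ → ℕ → ℝ
  | 0, n, k => ∏ i ∈ Finset.Icc (n + 1) k, (1 - ∑ l : Fin m, p l i)
  | r + 1, n, k => ∏ i ∈ Finset.Icc (n + 1) k, (1 - ∑ l : Fin m, p l i * (bA p σ r i (σ l i))⁻¹)

/-- `ρ_i(n) = min_{s ≥ n} σ_i(s)`. -/
noncomputable def rhoi {m : ℕ} (σ : Fin m → ℕ → ℕ) (i : Fin m) (n : ℕ) : ℕ :=
  sInf (σ i '' Set.Ici n)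

/-- `ρ(n) = min_{1 ≤ i ≤ m} ρ_i(n)`. -/
noncomputable def rho {m : ℕ} [NeZero m] (σ : Fin m → ℕ → ℕ) (n : ℕ) : ℕ :=
  Finset.univ.inf' Finset.univ_nonempty (fun i => rhoi σ i n)

private lemma prodlem (x f : ℕ → ℝ) (N : ℕ)
    (hx : ∀ n, N ≤ n → 0 < x n)
    (hf : ∀ i, N + 1 ≤ i → x (i - 1) ≤ f i * x i) :
    ∀ n, N ≤ n → ∀ k, n ≤ k →
      0 < ∏ i ∈ Finset.Icc (n + 1) k, f i ∧
      x n ≤ (∏ i ∈ Finset.Icc (n + 1) k, f i) * x k := by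
  intro n hn k hk
  induction k, hk using Nat.le_induction with
  | base => simp [Finset.Icc_eq_empty_of_lt (Nat.lt_succ_self n)]
  | succ k hk ih =>
    obtain ⟨hP, hxle⟩ := ih
    have hf1 : x k ≤ f (k + 1) * x (k + 1) := by simpa using hf (k + 1) (by omega)
    have hxk : 0 < x k := hx k (le_trans hn hk)
    have hxk1 : 0 < x (k + 1) := hx (k + 1) (by omega)
    have hfpos : 0 < f (k + 1) := by nlinarith
    rw [Finset.prod_Icc_succ_top (by omega : n + 1 ≤ k + 1)]
    refine ⟨by positivity, ?_⟩
    calc x n ≤ (∏ i ∈ Finset.Icc (n + 1) k, f i) * x k := hxle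
      _ ≤ (∏ i ∈ Finset.Icc (n + 1) k, f i) * (f (k + 1) * x (k + 1)) :=
          mul_le_mul_of_nonneg_left hf1 hP.le
      _ = _ := by ring

private lemma keylem {m : ℕ} (p : Fin m → ℕ → ℝ) (σ : Fin m → ℕ → ℕ)
    (hp : ∀ i : Fin m, ∀ n : ℕ, 0 ≤ p i n)
    (hσ : ∀ i : Fin m, ∀ n : ℕ, 1 ≤ n → n + 1 ≤ σ i n)
    (hsum : ∀ n : ℕ, ∑ i : Fin m, p i n < 1)
    (x : ℕ → ℝ)
    (hxeq : ∀ n : ℕ, 1 ≤ n → x n - x (n - 1) - ∑ i : Fin m, p i n * x (σ i n) = 0)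
    (N : ℕ) (hN : 1 ≤ N) (hx : ∀ n, N ≤ n → 0 < x n) :
    ∀ r : ℕ, ∀ n, N ≤ n → ∀ k, n ≤ k →
      0 < bA p σ r n k ∧ x n ≤ bA p σ r n k * x k := by
  have hmono : ∀ a, N ≤ a → ∀ b, a ≤ b → x a ≤ x b := by
    intro a ha b hb
    induction b, hb using Nat.le_induction with
    | base => exact le_refl _
    | succ b hb ih =>
      have heq := hxeq (b + 1) (by omega)
      have hnn : 0 ≤ ∑ i : Fin m, p i (b + 1) * x (σ i (b + 1)) := by
        apply Finset.sum_nonneg; intro i _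
        exact mul_nonneg (hp i _) (hx _ (by have := hσ i (b + 1) (by omega); omega)).le
      have : x b ≤ x (b + 1) := by
        have hb1 : (b + 1) - 1 = b := by omega
        rw [hb1] at heq; linarith
      linarith
  intro r
  induction r with
  | zero =>
    intro n hn k hk
    have h := prodlem x (fun i => 1 - ∑ l : Fin m, p l i) N hx ?_ n hn k hk
    · simpa [bA] using h
    · intro i hi
      have heq := hxeq i (by omega)
      have hle : ∑ l : Fin m, p l i * x i ≤ ∑ l : Fin m, p l i * x (σ l i) := by
        apply Finset.sum_le_sum; intro l _
        exact mul_le_mul_of_nonneg_left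
          (hmono i (by omega) (σ l i) (by have := hσ l i (by omega); omega)) (hp l i)
      have hsm : ∑ l : Fin m, p l i * x i = (∑ l : Fin m, p l i) * x i :=
        (Finset.sum_mul _ _ _).symm
      have : x (i - 1) ≤ (1 - ∑ l : Fin m, p l i) * x i := by
        rw [sub_mul, one_mul, ← hsm]; linarith
      exact this
  | succ r ih =>
    intro n hn k hk
    have h := prodlem x (fun i => 1 - ∑ l : Fin m, p l i * (bA p σ r i (σ l i))⁻¹) N hx ?_ n hn k hk
    · simpa [bA] using h
    · intro i hi
      have heq := hxeq i (by omega)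
      have hle : ∑ l : Fin m, p l i * (bA p σ r i (σ l i))⁻¹ * x i
          ≤ ∑ l : Fin m, p l i * x (σ l i) := by
        apply Finset.sum_le_sum; intro l _
        obtain ⟨hb, hxb⟩ := ih i (by omega) (σ l i) (by have := hσ l i (by omega); omega)
        have hinv : (bA p σ r i (σ l i))⁻¹ * x i ≤ x (σ l i) := by
          rw [inv_mul_le_iff₀ hb]; exact hxb
        calc p l i * (bA p σ r i (σ l i))⁻¹ * x i
            = p l i * ((bA p σ r i (σ l i))⁻¹ * x i) := by ring
          _ ≤ p l i * x (σ l i) := mul_le_mul_of_nonneg_left hinv (hp l i)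
      have hsm : ∑ l : Fin m, p l i * (bA p σ r i (σ l i))⁻¹ * x i
          = (∑ l : Fin m, p l i * (bA p σ r i (σ l i))⁻¹) * x i :=
        (Finset.sum_mul _ _ _).symm
      have : x (i - 1) ≤ (1 - ∑ l : Fin m, p l i * (bA p σ r i (σ l i))⁻¹) * x i := by
        rw [sub_mul, one_mul, ← hsm]; linarith
      exact this

private lemma nopos {m : ℕ} [NeZero m] (p : Fin m → ℕ → ℝ) (σ : Fin m → ℕ → ℕ)
    (hp : ∀ i : Fin m, ∀ n : ℕ, 0 ≤ p i n)
    (hσ : ∀ i : Fin m, ∀ n : ℕ, 1 ≤ n → n + 1 ≤ σ i n)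
    (hsum : ∀ n : ℕ, ∑ i : Fin m, p i n < 1)
    (r : ℕ)
    (hcond : 1 < Filter.limsup (fun n : ℕ =>
        ∑ j ∈ Finset.Icc n (rho σ n), ∑ i : Fin m, p i j * (bA p σ r (rho σ n) (σ i j))⁻¹)
      Filter.atTop)
    (x : ℕ → ℝ)
    (hxeq : ∀ n : ℕ, 1 ≤ n → x n - x (n - 1) - ∑ i : Fin m, p i n * x (σ i n) = 0)
    (N : ℕ) (hx : ∀ n, N ≤ n → 0 < x n) : False := by
  set M := max N 1 with hM
  have hM1 : 1 ≤ M := le_max_right _ _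
  have hx' : ∀ n, M ≤ n → 0 < x n := fun n hn => hx n (le_trans (le_max_left _ _) hn)
  have key := keylem p σ hp hσ hsum x hxeq M hM1 hx'
  set S : ℕ → ℝ := fun n =>
    ∑ j ∈ Finset.Icc n (rho σ n), ∑ i : Fin m, p i j * (bA p σ r (rho σ n) (σ i j))⁻¹ with hS
  -- rho facts
  have hρle : ∀ n, ∀ i : Fin m, ∀ j, n ≤ j → rho σ n ≤ σ i j := by
    intro n i j hj
    calc rho σ n ≤ rhoi σ i n := Finset.inf'_le _ (Finset.mem_univ i)
      _ ≤ σ i j := Nat.sInf_le ⟨j, hj, rfl⟩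
  have hρge : ∀ n, 1 ≤ n → n + 1 ≤ rho σ n := by
    intro n hn
    apply Finset.le_inf'
    intro i _
    have hne : (σ i '' Set.Ici n).Nonempty := ⟨σ i n, n, le_refl n, rfl⟩
    obtain ⟨s, hs, heq⟩ := Nat.sInf_mem hne
    have : rhoi σ i n = σ i s := heq.symm
    rw [this]
    have hs' : n ≤ s := hs
    have := hσ i s (by omega)
    omega
  -- telescoping
  have tele : ∀ a, 1 ≤ a → ∀ K, a ≤ K →
      ∑ j ∈ Finset.Icc a K, (x j - x (j - 1)) = x K - x (a - 1) := by
    intro a ha K hK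
    induction K, hK using Nat.le_induction with
    | base => simp
    | succ K hK ih =>
      rw [Finset.sum_Icc_succ_top (by omega : a ≤ K + 1), ih]
      have : (K + 1) - 1 = K := by omega
      rw [this]; ring
  -- main bound
  have hSbound : ∀ n, M + 1 ≤ n → 0 ≤ S n ∧ S n < 1 := by
    intro n hn
    set R := rho σ n with hR
    have hnR : n + 1 ≤ R := hρge n (by omega)
    have hMR : M ≤ R := by omega
    have hxR : 0 < x R := hx' R hMR
    have hterm : ∀ j ∈ Finset.Icc n R, ∀ i : Fin m,
        0 ≤ p i j * (bA p σ r R (σ i j))⁻¹ ∧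
        p i j * (bA p σ r R (σ i j))⁻¹ * x R ≤ p i j * x (σ i j) := by
      intro j hj i
      rw [Finset.mem_Icc] at hj
      obtain ⟨hb, hxb⟩ := key r R hMR (σ i j) (hρle n i j hj.1)
      constructor
      · exact mul_nonneg (hp i j) (inv_nonneg.mpr hb.le)
      · have hinv : (bA p σ r R (σ i j))⁻¹ * x R ≤ x (σ i j) := by
          rw [inv_mul_le_iff₀ hb]; exact hxb
        calc p i j * (bA p σ r R (σ i j))⁻¹ * x R
            = p i j * ((bA p σ r R (σ i j))⁻¹ * x R) := by ring
          _ ≤ p i j * x (σ i j) := mul_le_mul_of_nonneg_left hinv (hp i j)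
    have hSnn : 0 ≤ S n := by
      apply Finset.sum_nonneg; intro j hj
      apply Finset.sum_nonneg; intro i _
      exact (hterm j hj i).1
    refine ⟨hSnn, ?_⟩
    have hsum1 : ∑ j ∈ Finset.Icc n R, ∑ i : Fin m, p i j * x (σ i j) = x R - x (n - 1) := by
      rw [← tele n (by omega) R (by omega)]
      apply Finset.sum_congr rfl
      intro j hj
      rw [Finset.mem_Icc] at hj
      have := hxeq j (by omega)
      linarith
    have hsum2 : S n * x R ≤ ∑ j ∈ Finset.Icc n R, ∑ i : Fin m, p i j * x (σ i j) := by
      rw [hS]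
      rw [Finset.sum_mul]
      apply Finset.sum_le_sum
      intro j hj
      rw [Finset.sum_mul]
      apply Finset.sum_le_sum
      intro i _
      exact (hterm j hj i).2
    have hxn1 : 0 < x (n - 1) := hx' (n - 1) (by omega)
    have : S n * x R < x R := by linarith [hsum2, hsum1.le]
    exact lt_of_mul_lt_mul_right (by linarith) hxR.le
  -- limsup contradiction
  have hle1 : ∀ᶠ n in Filter.atTop, S n ≤ 1 :=
    Filter.eventually_atTop.mpr ⟨M + 1, fun n hn => (hSbound n hn).2.le⟩
  have hge0 : ∀ᶠ n in Filter.atTop, (0 : ℝ) ≤ S n :=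
    Filter.eventually_atTop.mpr ⟨M + 1, fun n hn => (hSbound n hn).1⟩
  have hcb : Filter.IsCoboundedUnder (· ≤ ·) Filter.atTop S :=
    Filter.isCoboundedUnder_le_of_eventually_le Filter.atTop hge0
  have : Filter.limsup S Filter.atTop ≤ 1 := Filter.limsup_le_of_le hcb hle1
  rw [hS] at this
  exact absurd hcond (not_lt.mpr this)

/-- Theorem 2.4′: if `∑_i p_i(n) < 1` for all `n` and for some `r ∈ ℕ`,
`limsup_{n→∞} ∑_{j=n}^{ρ(n)} ∑_{i=1}^m p_i(j) b_r(ρ(n), σ_i(j))⁻¹ > 1`,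
then every solution of the advanced equation oscillates. -/
theorem stmt_6 {m : ℕ} [NeZero m] (p : Fin m → ℕ → ℝ) (σ : Fin m → ℕ → ℕ)
    (hp : ∀ i : Fin m, ∀ n : ℕ, 0 ≤ p i n)
    (hσ : ∀ i : Fin m, ∀ n : ℕ, 1 ≤ n → n + 1 ≤ σ i n)
    (hsum : ∀ n : ℕ, ∑ i : Fin m, p i n < 1)
    (r : ℕ)
    (hcond : 1 < Filter.limsup (fun n : ℕ =>
        ∑ j ∈ Finset.Icc n (rho σ n), ∑ i : Fin m, p i j * (bA p σ r (rho σ n) (σ i j))⁻¹)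
      Filter.atTop)
    (x : ℕ → ℝ)
    (hxeq : ∀ n : ℕ, 1 ≤ n → x n - x (n - 1) - ∑ i : Fin m, p i n * x (σ i n) = 0) :
    (¬ ∃ N : ℕ, ∀ n ≥ N, 0 < x n) ∧ (¬ ∃ N : ℕ, ∀ n ≥ N, x n < 0) := by
  constructor
  · rintro ⟨N, hN⟩
    exact nopos p σ hp hσ hsum r hcond x hxeq N (fun n hn => hN n hn)
  · rintro ⟨N, hN⟩
    refine nopos p σ hp hσ hsum r hcond (fun n => -x n) ?_ N
      (fun n hn => by simpa using hN n hn)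
    intro n hn
    have h := hxeq n hn
    simp only [mul_neg]
    rw [Finset.sum_neg_distrib]
    linarith
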